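/- Every partial ordinal semigroup in which the product of every sequence indexed by an ordinal ≤ γ is defined (γ an infinite ordinal) admits at most one extension of its product to all sequences indexed by ordinals of cardinality ≤ |γ|, subject to the generalized associativity axiom (Ord) and the unary axiom (U). Uniqueness part: any two such extensions agree on all sequences indexed by any ordinal δ with |δ| = |γ|. -/

import Mathlib

universe u

open Ordinal Cardinal

/-- `π : δ → η` is a surjective order-preserving map between the ordinals `δ` and `η`
whose fiber over each `j < η` is the (nonempty) interval `[β j, β j + ε j)`. -/
def IsFiberDecomp (δ η : Ordinal.{u}) (π β ε : Ordinal.{u} → Ordinal.{u}) : Prop :=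
  (∀ i < δ, π i < η) ∧
  (∀ i < δ, ∀ i' < δ, i ≤ i' → π i ≤ π i') ∧
  (∀ j < η, ∃ i < δ, π i = j) ∧
  (∀ j < η, ∀ i : Ordinal.{u}, (i < δ ∧ π i = j) ↔ (β j ≤ i ∧ i < β j + ε j))

/-- A partial ordinal semigroup: a partial product (`none` = undefined) on
ordinal-indexed sequences (a sequence indexed by `δ` is represented by a total function,
and the product only depends on the values at indices `< δ`), satisfying axiom (U)
(singleton products) and axiom (Ord) (generalized associativity: whenever the product of
`(a i)_{i<δ}` is defined and `π : δ → η` is a surjective order-preserving map with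
interval fibers `[β j, β j + ε j)`, all the fiber products and the `η`-indexed product of
the fiber products are defined, and the latter equals the product over `δ`). -/
structure PartialOrdinalSemigroup (S : Type u) : Type (u + 1) where
  prod : Ordinal.{u} → (Ordinal.{u} → S) → Option S
  congr : ∀ δ a b, (∀ i < δ, a i = b i) → prod δ a = prod δ b
  unary : ∀ a, prod 1 a = some (a 0)
  ord : ∀ δ η (a : Ordinal.{u} → S) (π β ε : Ordinal.{u} → Ordinal.{u}) (s : S),
    IsFiberDecomp δ η π β ε → prod δ a = some s →
    ∃ b : Ordinal.{u} → S,
      (∀ j < η, prod (ε j) (fun γ => a (β j + γ)) = some (b j)) ∧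
      prod η b = some s

/-- The product of `P` is defined exactly on sequences whose index ordinal satisfies `D`. -/
def DomExactly {S : Type u} (P : PartialOrdinalSemigroup S)
    (D : Ordinal.{u} → Prop) : Prop :=
  ∀ δ a, (P.prod δ a).isSome ↔ D δ

/-- `Q` extends `P`: every product defined in `P` is defined in `Q` with the same value. -/
def Extends {S : Type u} (Q P : PartialOrdinalSemigroup S) : Prop :=
  ∀ δ a s, P.prod δ a = some s → Q.prod δ a = some s

/-- Successor decomposition: `δ₀ + 1` splits into `[0, δ₀)` and `{δ₀}`. -/
lemma isFiberDecomp_succ (δ₀ : Ordinal.{u}) (h0 : 0 < δ₀) :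
    IsFiberDecomp (δ₀ + 1) 2 (fun i => if i < δ₀ then 0 else 1)
      (fun j => if j = 0 then 0 else δ₀) (fun j => if j = 0 then δ₀ else 1) := by
  have htwo : ∀ j : Ordinal.{u}, j < 2 → j = 0 ∨ j = 1 := by
    intro j hj
    have : j ≤ 1 := by
      have h2 : (2 : Ordinal.{u}) = 1 + 1 := by norm_num
      rw [h2, Ordinal.add_one_eq_succ, Order.lt_succ_iff] at hj
      exact hj
    exact Ordinal.le_one_iff.1 this
  have hlt1 : ∀ i : Ordinal.{u}, i < δ₀ + 1 ↔ i ≤ δ₀ := by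
    intro i; rw [Ordinal.add_one_eq_succ, Order.lt_succ_iff]
  have hβ0 : (if (0 : Ordinal.{u}) = 0 then (0 : Ordinal.{u}) else δ₀) = 0 := if_pos rfl
  have hβ1 : (if (1 : Ordinal.{u}) = 0 then (0 : Ordinal.{u}) else δ₀) = δ₀ := if_neg one_ne_zero
  have hε0 : (if (0 : Ordinal.{u}) = 0 then δ₀ else (1 : Ordinal.{u})) = δ₀ := if_pos rfl
  have hε1 : (if (1 : Ordinal.{u}) = 0 then δ₀ else (1 : Ordinal.{u})) = 1 := if_neg one_ne_zero
  refine ⟨?_, ?_, ?_, ?_⟩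
  · intro i _
    by_cases h : i < δ₀
    · simp only [if_pos h]
      exact lt_of_lt_of_le zero_lt_one one_le_two
    · simp only [if_neg h]
      exact one_lt_two
  · intro i _ i' _ hle
    by_cases h : i < δ₀
    · simp only [if_pos h]
      exact zero_le
    · have h' : ¬ i' < δ₀ := fun hc => h (lt_of_le_of_lt hle hc)
      simp only [if_neg h, if_neg h']
      exact le_rfl
  · intro j hj
    rcases htwo j hj with rfl | rfl
    · exact ⟨0, (hlt1 0).2 (zero_le), if_pos h0⟩
    · exact ⟨δ₀, (hlt1 δ₀).2 le_rfl, if_neg (lt_irrefl δ₀)⟩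
  · intro j hj i
    rcases htwo j hj with rfl | rfl
    · dsimp only
      rw [hβ0, hε0, zero_add]
      constructor
      · rintro ⟨_, hpi⟩
        refine ⟨zero_le, ?_⟩
        by_contra h
        rw [if_neg h] at hpi
        exact one_ne_zero hpi
      · rintro ⟨_, h⟩
        exact ⟨(hlt1 i).2 h.le, if_pos h⟩
    · dsimp only
      rw [hβ1, hε1, hlt1 i]
      constructor
      · rintro ⟨hle, hpi⟩
        refine ⟨?_, hle⟩
        by_contra h
        push_neg at h
        rw [if_pos h] at hpi
        exact one_ne_zero hpi.symm
      · rintro ⟨hge, hlt⟩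
        exact ⟨hlt, if_neg (not_lt.2 hge)⟩

/-- Every ordinal `δ` with `γ < δ` and `|δ| ≤ |γ|` admits a fiber decomposition with
outer index `η < δ` and all fiber lengths `< δ`. -/
lemma exists_decomp (γ δ : Ordinal.{u}) (hγ : Ordinal.omega0 ≤ γ) (hδ : γ < δ)
    (hcard : δ.card ≤ γ.card) :
    ∃ η π β ε, IsFiberDecomp δ η π β ε ∧ η < δ ∧ ∀ j < η, ε j < δ := by
  rcases Ordinal.zero_or_succ_or_isSuccLimit δ with h0 | ⟨δ₀, rfl⟩ | hlim
  · subst h0; exact absurd hδ (not_lt_of_ge zero_le)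
  · -- successor case
    rw [← Ordinal.add_one_eq_succ]
    have hγδ₀ : γ ≤ δ₀ := by
      rw [← Ordinal.add_one_eq_succ, Ordinal.add_one_eq_succ, Order.lt_succ_iff] at hδ
      exact hδ
    have h0 : 0 < δ₀ := lt_of_lt_of_le (lt_of_lt_of_le Ordinal.omega0_pos hγ) hγδ₀
    refine ⟨2, _, _, _, isFiberDecomp_succ δ₀ h0, ?_, ?_⟩
    · calc (2 : Ordinal.{u}) < Ordinal.omega0 := by
            exact_mod_cast Ordinal.nat_lt_omega0 2
        _ ≤ γ := hγ
        _ < δ₀ + 1 := lt_of_le_of_lt hγδ₀ (by rw [Ordinal.add_one_eq_succ]; exact Order.lt_succ _)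
    · intro j _
      by_cases h : j = 0
      · rw [if_pos h]
        rw [Ordinal.add_one_eq_succ]; exact Order.lt_succ _
      · rw [if_neg h]
        calc (1 : Ordinal.{u}) < Ordinal.omega0 := Ordinal.one_lt_omega0
          _ ≤ γ := hγ
          _ < δ₀ + 1 := hδ.trans_eq (Ordinal.add_one_eq_succ δ₀)
  · -- limit case
    obtain ⟨f, hf⟩ := Ordinal.exists_fundamental_sequence δ
    have hclim : Order.IsSuccLimit (δ.cof.ord) := Cardinal.isSuccLimit_ord (Ordinal.aleph0_le_cof.2 hlim)
    -- totalize the fundamental sequence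
    set g : Ordinal.{u} → Ordinal.{u} := fun j => if h : j < δ.cof.ord then f j h else 0 with hg
    have hgeq : ∀ j (h : j < δ.cof.ord), g j = f j h := fun j h => dif_pos h
    have hglt : ∀ j < δ.cof.ord, g j < δ := by
      intro j hj
      rw [hgeq j hj]
      conv_rhs => rw [← hf.blsub_eq]
      exact Ordinal.lt_blsub _ j hj
    have hgmono : ∀ i j, i < δ.cof.ord → j < δ.cof.ord → i < j → g i < g j := by
      intro i j hi hj hij
      rw [hgeq i hi, hgeq j hj]
      exact hf.strict_mono hi hj hij
    set β : Ordinal.{u} → Ordinal.{u} := fun j => Ordinal.blsub j (fun j' _ => g j') with hβ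
    have hβmono : ∀ j j' : Ordinal.{u}, j ≤ j' → β j ≤ β j' := by
      intro j j' hle
      exact Ordinal.blsub_le fun i hi => Ordinal.lt_blsub _ i (lt_of_lt_of_le hi hle)
    have hβleg : ∀ j < δ.cof.ord, β j ≤ g j := by
      intro j hj
      exact Ordinal.blsub_le fun i hi => hgmono i j (hi.trans hj) hj hi
    have hgltβ : ∀ j : Ordinal.{u}, g j < β (j + 1) := by
      intro j
      exact Ordinal.lt_blsub _ j (by rw [Ordinal.add_one_eq_succ]; exact Order.lt_succ _)
    have hβled : ∀ j < δ.cof.ord, β (j + 1) < δ := by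
      intro j hj
      have hj1 : j + 1 < δ.cof.ord := by
        rw [Ordinal.add_one_eq_succ]; exact hclim.succ_lt hj
      exact lt_of_le_of_lt (hβleg _ hj1) (hglt _ hj1)
    have hcover : ∀ i < δ, ∃ j < δ.cof.ord, i < β (j + 1) := by
      intro i hi
      conv at hi => rw [← hf.blsub_eq]
      rw [Ordinal.lt_blsub_iff] at hi
      obtain ⟨j, hj, hle⟩ := hi
      exact ⟨j, hj, lt_of_le_of_lt (by rwa [hgeq j hj]) (hgltβ j)⟩
    have hβclosed : ∀ j i, (∀ j' < j, β (j' + 1) ≤ i) → β j ≤ i := by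
      intro j i h
      exact Ordinal.blsub_le fun j' hj' => lt_of_lt_of_le (hgltβ j') (h j' hj')
    set π : Ordinal.{u} → Ordinal.{u} := fun i => sInf {j | i < β (j + 1)} with hπ
    have hmem : ∀ i < δ, π i ∈ {j | i < β (j + 1)} := by
      intro i hi
      obtain ⟨j, _, hj2⟩ := hcover i hi
      exact csInf_mem ⟨j, hj2⟩
    have hchar : ∀ j, ∀ i < δ, (π i = j ↔ (β j ≤ i ∧ i < β (j + 1))) := by
      intro j i hi
      constructor
      · rintro rfl
        refine ⟨hβclosed _ i fun j' hj' => ?_, hmem i hi⟩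
        by_contra hcon
        push_neg at hcon
        exact absurd (csInf_le' (s := {j | i < β (j + 1)}) hcon) (not_le.2 hj')
      · rintro ⟨h1, h2⟩
        refine le_antisymm (csInf_le' h2) (le_csInf ⟨j, h2⟩ ?_)
        intro j'' hj''
        by_contra hcon
        push_neg at hcon
        have hmle : β (j'' + 1) ≤ β j := hβmono _ _ (by
          rw [Ordinal.add_one_eq_succ, Order.succ_le_iff]; exact hcon)
        exact absurd hj'' (not_lt.2 (hmle.trans h1))
    refine ⟨δ.cof.ord, π, β, fun j => β (j + 1) - β j, ⟨?_, ?_, ?_, ?_⟩, ?_, ?_⟩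
    · intro i hi
      obtain ⟨j, hj1, hj2⟩ := hcover i hi
      exact lt_of_le_of_lt (csInf_le' hj2) hj1
    · intro i hi i' hi' hle
      have h' := hmem i' hi'
      exact csInf_le' (lt_of_le_of_lt hle h')
    · intro j hj
      refine ⟨g j, hglt j hj, ?_⟩
      exact (hchar j (g j) (hglt j hj)).2 ⟨hβleg j hj, hgltβ j⟩
    · intro j hj i
      have hadd : β j + (β (j + 1) - β j) = β (j + 1) :=
        Ordinal.add_sub_cancel_of_le (hβmono j (j + 1) (by
          rw [Ordinal.add_one_eq_succ]; exact (Order.lt_succ j).le))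
      rw [hadd]
      constructor
      · rintro ⟨hi, hpi⟩
        exact (hchar j i hi).1 hpi
      · rintro ⟨h1, h2⟩
        have hi : i < δ := lt_of_lt_of_le h2 (le_of_lt (hβled j hj))
        exact ⟨hi, (hchar j i hi).2 ⟨h1, h2⟩⟩
    · calc δ.cof.ord ≤ δ.card.ord := Cardinal.ord_le_ord.2 (Ordinal.cof_le_card δ)
        _ ≤ γ.card.ord := Cardinal.ord_le_ord.2 hcard
        _ ≤ γ := Cardinal.ord_card_le γ
        _ < δ := hδ
    · intro j hj
      exact lt_of_le_of_lt (Ordinal.sub_le_self _ _) (hβled j hj)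

/-- Uniqueness of the extension: if `P` is a `≤γ`-semigroup (`γ` infinite) and `Q₁`, `Q₂`
are both extensions of `P` whose products are defined exactly on sequences indexed by
nonzero ordinals of cardinality `≤ |γ|`, then `Q₁` and `Q₂` agree on all sequences
indexed by any ordinal `δ` with `|δ| = |γ|`. -/
theorem extension_unique {S : Type u} (γ : Ordinal.{u}) (hγ : Ordinal.omega0 ≤ γ)
    (P Q₁ Q₂ : PartialOrdinalSemigroup S)
    (hP : DomExactly P (fun δ => 0 < δ ∧ δ ≤ γ))
    (hQ₁ : DomExactly Q₁ (fun δ => 0 < δ ∧ δ.card ≤ γ.card))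
    (hQ₂ : DomExactly Q₂ (fun δ => 0 < δ ∧ δ.card ≤ γ.card))
    (hE₁ : Extends Q₁ P) (hE₂ : Extends Q₂ P) :
    ∀ δ : Ordinal.{u}, δ.card = γ.card → ∀ a, Q₁.prod δ a = Q₂.prod δ a := by
  have key : ∀ δ : Ordinal.{u}, 0 < δ → δ.card ≤ γ.card → ∀ a,
      Q₁.prod δ a = Q₂.prod δ a := by
    intro δ
    induction δ using Ordinal.induction with
    | h δ IH =>
      intro hpos hcard a
      rcases le_or_gt δ γ with hle | hlt
      · -- the product is already defined in P
        obtain ⟨s, hs⟩ := Option.isSome_iff_exists.1 ((hP δ a).2 ⟨hpos, hle⟩)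
        rw [hE₁ δ a s hs, hE₂ δ a s hs]
      · obtain ⟨η, π, β, ε, hdec, hη, hε⟩ := exists_decomp γ δ hγ hlt hcard
        have hη0 : 0 < η := lt_of_le_of_lt (zero_le) (hdec.1 0 hpos)
        have hε0 : ∀ j < η, 0 < ε j := by
          intro j hj
          obtain ⟨i, hi, hpi⟩ := hdec.2.2.1 j hj
          obtain ⟨h1, h2⟩ := (hdec.2.2.2 j hj i).1 ⟨hi, hpi⟩
          have : β j < β j + ε j := lt_of_le_of_lt h1 h2
          rwa [← add_lt_add_iff_left (β j), add_zero]
        obtain ⟨s₁, hs₁⟩ := Option.isSome_iff_exists.1 ((hQ₁ δ a).2 ⟨hpos, hcard⟩)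
        obtain ⟨s₂, hs₂⟩ := Option.isSome_iff_exists.1 ((hQ₂ δ a).2 ⟨hpos, hcard⟩)
        obtain ⟨b₁, hb₁, hout₁⟩ := Q₁.ord δ η a π β ε s₁ hdec hs₁
        obtain ⟨b₂, hb₂, hout₂⟩ := Q₂.ord δ η a π β ε s₂ hdec hs₂
        have hbeq : ∀ j < η, b₁ j = b₂ j := by
          intro j hj
          have heq := IH (ε j) (hε j hj) (hε0 j hj)
            ((Ordinal.card_le_card (hε j hj).le).trans hcard) (fun x => a (β j + x))
          rw [hb₁ j hj, hb₂ j hj] at heq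
          exact Option.some.inj heq
        have h1 : Q₁.prod η b₁ = Q₂.prod η b₁ :=
          IH η hη hη0 ((Ordinal.card_le_card hη.le).trans hcard) b₁
        have h2 : Q₂.prod η b₁ = Q₂.prod η b₂ := Q₂.congr η b₁ b₂ hbeq
        rw [hs₁, hs₂, ← hout₁, ← hout₂, h1, h2]
  intro δ hδcard a
  have hℵ : Cardinal.aleph0 ≤ δ.card := by
    rw [hδcard, Ordinal.aleph0_le_card]; exact hγ
  have hpos : 0 < δ := by
    rcases eq_zero_or_pos δ with rfl | h
    · rw [Ordinal.card_zero] at hℵ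
      exact absurd hℵ (not_le.2 Cardinal.aleph0_pos)
    · exact h
  exact key δ hpos (le_of_eq hδcard) a
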